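/- Let G be a CSN(k) group in which every class-≤k nilpotent subgroup is contained in a maximal one (e.g., by Zorn's lemma when chains of class-≤k nilpotent subgroups have class-≤k nilpotent unions). If G contains a nontrivial normal subgroup N that is nilpotent of class at most k, then G itself is nilpotent of class at most k. -/

import Mathlib

def Malnormal {G : Type*} [Group G] (H : Subgroup G) : Prop :=
  ∀ x : G, x ∉ H → ∀ h ∈ H, x⁻¹ * h * x ∈ H → h = 1

def NilpClassLe {G : Type*} [Group G] (k : ℕ) (H : Subgroup G) : Prop :=
  (⊤ : Subgroup H).lowerCentralSeries k = ⊥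

theorem stmt18 {G : Type*} [Group G] (k : ℕ)
    (hCSN : ∀ H : Subgroup G, Maximal (NilpClassLe k) H → Malnormal H)
    (hmax : ∀ H : Subgroup G, NilpClassLe k H →
      ∃ M : Subgroup G, H ≤ M ∧ Maximal (NilpClassLe k) M)
    (N : Subgroup G) (hN : N.Normal) (hNbot : N ≠ ⊥) (hNnilp : NilpClassLe k N) :
    (⊤ : Subgroup G).lowerCentralSeries k = ⊥ := by
  obtain ⟨M, hNM, hM⟩ := hmax N hNnilp
  have hMtop : M = ⊤ := by
    by_contra hne
    obtain ⟨x, hx⟩ : ∃ x : G, x ∉ M := by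
      by_contra h
      push_neg at h
      exact hne ((Subgroup.eq_top_iff' M).mpr h)
    obtain ⟨n, hnN, hn1⟩ : ∃ n ∈ N, n ≠ 1 := by
      by_contra h
      push_neg at h
      exact hNbot (Subgroup.eq_bot_iff_forall _ |>.mpr h)
    have hconj : x⁻¹ * n * x ∈ N := by
      have := hN.conj_mem n hnN x⁻¹
      simpa [mul_assoc] using this
    exact hn1 (hCSN M hM x hx n (hNM hnN) (hNM hconj))
  have htop : (⊤ : Subgroup (↥(⊤ : Subgroup G))).lowerCentralSeries k = ⊥ := hMtop ▸ hM.prop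
  have hinj : Function.Injective
      ((Subgroup.topEquiv (G := G)).symm.toMonoidHom) :=
    (Subgroup.topEquiv (G := G)).symm.injective
  rw [← Subgroup.top_subtype_lowerCentralSeries, htop, Subgroup.map_bot]
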